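/- Let N ∈ ℕ, let A, C, and B¹,…,Bᴺ, Y¹,…,Yᴺ be Polish spaces, for each i let νⁱ be a nonnegative countably additive Borel measure on Yⁱ and ηⁱ : A × Yⁱ → [0,∞) a function such that the pair (ηⁱ, νⁱ) satisfies Condition C1 and ∫ ηⁱ(a,y) νⁱ(dy) = 1 for every a ∈ A. Let g : A × B¹ × ⋯ × Bᴺ × C → ℝ be bounded and uniformly continuous. For each N-tuple of Markov kernels κⁱ from Yⁱ to Bⁱ define f_{κ¹,…,κᴺ}(a,c) = ∫ g(a, b¹,…,bᴺ, c) ∏_{i=1}^N κⁱ(yⁱ)(dbⁱ) ηⁱ(a,yⁱ) νⁱ(dyⁱ). Then the family {f_{κ¹,…,κᴺ}} over all N-tuples of Markov kernels is uniformly bounded by sup|g| and uniformly equicontinuous on A × C. -/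

import Mathlib

open MeasureTheory ProbabilityTheory Filter Topology TopologicalSpace
open scoped ENNReal NNReal

noncomputable section

section AuxLemmas
open Set


lemma lintegral_pi_prod {n : ℕ} {Y : Fin n → Type*} [∀ i, MeasurableSpace (Y i)]
    (μ : ∀ i, Measure (Y i)) [∀ i, SigmaFinite (μ i)]
    (f : ∀ i, Y i → ℝ≥0∞) (hf : ∀ i, Measurable (f i)) :
    ∫⁻ y, ∏ i, f i (y i) ∂Measure.pi μ = ∏ i, ∫⁻ x, f i x ∂μ i := by
  induction n with
  | zero => simp
  | succ n ih =>
    have hmp := (measurePreserving_piFinSuccAbove μ 0).symm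
    have hFm : Measurable fun y : ∀ i, Y i => ∏ i, f i (y i) :=
      Finset.measurable_prod _ fun i _ => (hf i).comp (measurable_pi_apply i)
    have h2m : Measurable fun z2 : ∀ j : Fin n, Y (Fin.succAbove 0 j) =>
        ∏ j, f (Fin.succAbove 0 j) (z2 j) :=
      Finset.measurable_prod _ fun j _ => (hf _).comp (measurable_pi_apply j)
    calc ∫⁻ y, ∏ i, f i (y i) ∂Measure.pi μ
        = ∫⁻ z : Y 0 × (∀ j : Fin n, Y (Fin.succAbove 0 j)),
            ∏ i, f i ((MeasurableEquiv.piFinSuccAbove Y 0).symm z i)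
            ∂((μ 0).prod (Measure.pi fun j => μ (Fin.succAbove 0 j))) := by
          rw [← hmp.lintegral_comp hFm]
      _ = ∫⁻ z : Y 0 × (∀ j : Fin n, Y (Fin.succAbove 0 j)),
            f 0 z.1 * ∏ j : Fin n, f (Fin.succAbove 0 j) (z.2 j)
            ∂((μ 0).prod (Measure.pi fun j => μ (Fin.succAbove 0 j))) := by
          refine lintegral_congr fun z => ?_
          rw [Fin.prod_univ_succAbove (fun i => f i ((MeasurableEquiv.piFinSuccAbove Y 0).symm z i)) 0]
          have hz : (MeasurableEquiv.piFinSuccAbove Y 0).symm z = Fin.insertNth 0 z.1 z.2 := rfl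
          rw [hz, Fin.insertNth_apply_same]
          exact congrArg _ (Finset.prod_congr rfl fun j _ => by
            rw [Fin.insertNth_apply_succAbove])
      _ = (∫⁻ x, f 0 x ∂μ 0) *
            ∏ j : Fin n, ∫⁻ x, f (Fin.succAbove 0 j) x ∂μ (Fin.succAbove 0 j) := by
          rw [lintegral_prod_mul (hf 0).aemeasurable h2m.aemeasurable,
            ih (fun j => μ (Fin.succAbove 0 j)) (fun j => f (Fin.succAbove 0 j)) (fun j => hf _)]
      _ = ∏ i, ∫⁻ x, f i x ∂μ i :=
          (Fin.prod_univ_succAbove (fun i => ∫⁻ x, f i x ∂μ i) 0).symm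

lemma pi_box_le {ι : Type*} [Fintype ι] {Y : ι → Type*} [∀ i, MeasurableSpace (Y i)]
    (ν : ∀ i, Measure (Y i)) (s : ∀ i, Set (Y i)) :
    Measure.pi ν (Set.pi univ s) ≤ ∏ i, ν i (s i) := by
  calc Measure.pi ν (Set.pi univ s)
      ≤ Measure.pi ν (Set.pi univ fun i => toMeasurable (ν i) (s i)) :=
        measure_mono (Set.pi_mono fun i _ => subset_toMeasurable _ _)
    _ = OuterMeasure.pi (fun i => (ν i).toOuterMeasure)
          (Set.pi univ fun i => toMeasurable (ν i) (s i)) := by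
        rw [Measure.pi_def]
        exact toMeasure_apply _ _
          (MeasurableSet.pi countable_univ fun i _ => measurableSet_toMeasurable _ _)
    _ ≤ ∏ i, (ν i).toOuterMeasure (toMeasurable (ν i) (s i)) :=
        OuterMeasure.pi_pi_le _ _
    _ = ∏ i, ν i (s i) := by
        refine Finset.prod_congr rfl fun i _ => ?_
        rw [Measure.toOuterMeasure_apply]
        exact measure_toMeasurable _

lemma pi_le_pi_restrict {ι : Type*} [Fintype ι] {Y : ι → Type*} [∀ i, MeasurableSpace (Y i)]
    (ν : ∀ i, Measure (Y i)) (S : ∀ i, Set (Y i)) (hS : ∀ i, MeasurableSet (S i))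
    {T : Set (∀ i, Y i)} (hT : MeasurableSet T) (hTS : T ⊆ Set.pi univ S) :
    Measure.pi ν T ≤ Measure.pi (fun i => (ν i).restrict (S i)) T := by
  have hrhs : Measure.pi (fun i => (ν i).restrict (S i)) T =
      OuterMeasure.boundedBy
        (MeasureTheory.piPremeasure fun i => ((ν i).restrict (S i)).toOuterMeasure) T := by
    rw [Measure.pi_def]
    exact toMeasure_apply _ _ hT
  rw [hrhs, OuterMeasure.boundedBy_apply]
  refine le_iInf₂ fun t ht => ?_
  have hsub : T ⊆ ⋃ n, t n ∩ Set.pi univ S := by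
    intro y hy
    rcases Set.mem_iUnion.1 (ht hy) with ⟨n, hn⟩
    exact Set.mem_iUnion.2 ⟨n, hn, hTS hy⟩
  calc Measure.pi ν T ≤ ∑' n, Measure.pi ν (t n ∩ Set.pi univ S) :=
        le_trans (measure_mono hsub) (measure_iUnion_le _)
    _ ≤ ∑' n, ⨆ _ : (t n).Nonempty,
          MeasureTheory.piPremeasure (fun i => ((ν i).restrict (S i)).toOuterMeasure) (t n) := by
        refine ENNReal.tsum_le_tsum fun n => ?_
        rcases (t n).eq_empty_or_nonempty with he | hne
        · simp [he]
        rw [iSup_pos hne]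
        calc Measure.pi ν (t n ∩ Set.pi univ S)
            ≤ Measure.pi ν (Set.pi univ fun i => Function.eval i '' (t n ∩ Set.pi univ S)) :=
              measure_mono (subset_pi_eval_image univ _)
          _ ≤ ∏ i, ν i (Function.eval i '' (t n ∩ Set.pi univ S)) := pi_box_le _ _
          _ ≤ ∏ i, ((ν i).restrict (S i)).toOuterMeasure (Function.eval i '' t n) := by
              refine Finset.prod_le_prod' fun i _ => ?_
              rw [Measure.toOuterMeasure_apply, Measure.restrict_apply' (hS i)]
              refine measure_mono ?_
              rintro x ⟨y, ⟨hy1, hy2⟩, rfl⟩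
              exact ⟨⟨y, hy1, rfl⟩, hy2 i (Set.mem_univ i)⟩
          _ = MeasureTheory.piPremeasure (fun i => ((ν i).restrict (S i)).toOuterMeasure)
                (t n) := by simp [MeasureTheory.piPremeasure]

lemma sigmaFinite_restrict_support {Y : Type*} [MeasurableSpace Y] (ν : Measure Y)
    {f : Y → ℝ≥0∞} (hf : Measurable f) (hfin : ∫⁻ x, f x ∂ν ≠ ∞) :
    SigmaFinite (ν.restrict {x | f x ≠ 0}) := by
  set S : Set Y := {x | f x ≠ 0} with hS
  have hSm : MeasurableSet S := (hf (measurableSet_singleton 0)).compl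
  refine ⟨⟨⟨fun n => {x | ((n : ℝ≥0∞) + 1)⁻¹ ≤ f x} ∪ Sᶜ, fun n => trivial, fun n => ?_, ?_⟩⟩⟩
  · have h1 : (ν.restrict S) ({x | ((n : ℝ≥0∞) + 1)⁻¹ ≤ f x} ∪ Sᶜ) ≤
        ν {x | ((n : ℝ≥0∞) + 1)⁻¹ ≤ f x} := by
      rw [Measure.restrict_apply' hSm]
      refine measure_mono ?_
      rintro x ⟨hx1, hx2⟩
      rcases hx1 with h | h
      · exact h
      · exact absurd hx2 h
    refine lt_of_le_of_lt h1 ?_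
    refine lt_of_le_of_lt (meas_ge_le_lintegral_div hf.aemeasurable ?_ ?_) ?_
    · simp
    · simp [ENNReal.add_eq_top]
    · exact ENNReal.div_lt_top hfin (by simp)
  · ext x
    simp only [Set.mem_iUnion, Set.mem_union, Set.mem_univ, iff_true]
    rcases eq_or_ne (f x) 0 with h | h
    · exact ⟨0, Or.inr (by simp [hS, h])⟩
    · obtain ⟨n, hn⟩ := ENNReal.exists_inv_nat_lt h
      refine ⟨n, Or.inl ?_⟩
      refine le_trans (ENNReal.inv_le_inv.2 ?_) hn.le
      exact le_self_add

lemma lintegral_pi_prod_le {n : ℕ} {Y : Fin n → Type*} [∀ i, MeasurableSpace (Y i)]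
    (ν : ∀ i, Measure (Y i)) (f : ∀ i, Y i → ℝ≥0∞) (hf : ∀ i, Measurable (f i))
    (hfin : ∀ i, ∫⁻ x, f i x ∂ν i ≠ ∞) :
    ∫⁻ y, ∏ i, f i (y i) ∂Measure.pi ν ≤ ∏ i, ∫⁻ x, f i x ∂ν i := by
  classical
  set S : ∀ i, Set (Y i) := fun i => {x | f i x ≠ 0} with hSdef
  have hSm : ∀ i, MeasurableSet (S i) := fun i => ((hf i) (measurableSet_singleton 0)).compl
  set ν' : ∀ i, Measure (Y i) := fun i => (ν i).restrict (S i) with hν'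
  haveI : ∀ i, SigmaFinite (ν' i) := fun i => sigmaFinite_restrict_support (ν i) (hf i) (hfin i)
  have hpiSm : MeasurableSet (Set.pi univ S) := MeasurableSet.pi countable_univ fun i _ => hSm i
  have hvanish : ∀ y : ∀ i, Y i, y ∉ Set.pi univ S → ∏ i, f i (y i) = 0 := by
    intro y hy
    rw [Set.mem_pi] at hy
    push_neg at hy
    obtain ⟨i, _, hi⟩ := hy
    refine Finset.prod_eq_zero (Finset.mem_univ i) ?_
    simpa [hSdef] using hi
  have hle : (Measure.pi ν).restrict (Set.pi univ S) ≤ Measure.pi ν' := by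
    refine Measure.le_iff.2 fun s hs => ?_
    rw [Measure.restrict_apply hs]
    refine le_trans (pi_le_pi_restrict ν S hSm (hs.inter hpiSm) Set.inter_subset_right) ?_
    exact measure_mono Set.inter_subset_left
  calc ∫⁻ y, ∏ i, f i (y i) ∂Measure.pi ν
      = ∫⁻ y, (Set.pi univ S).indicator (fun y => ∏ i, f i (y i)) y ∂Measure.pi ν := by
        refine lintegral_congr fun y => ?_
        by_cases hy : y ∈ Set.pi univ S
        · rw [Set.indicator_of_mem hy]
        · rw [Set.indicator_of_notMem hy, hvanish y hy]
    _ = ∫⁻ y, ∏ i, f i (y i) ∂(Measure.pi ν).restrict (Set.pi univ S) := by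
        rw [lintegral_indicator hpiSm]
    _ ≤ ∫⁻ y, ∏ i, f i (y i) ∂Measure.pi ν' := lintegral_mono' hle le_rfl
    _ = ∏ i, ∫⁻ x, f i x ∂ν' i := lintegral_pi_prod ν' f hf
    _ ≤ ∏ i, ∫⁻ x, f i x ∂ν i :=
        Finset.prod_le_prod' fun i _ => lintegral_mono' Measure.restrict_le_self le_rfl

lemma measurable_pi_kernel {n : ℕ} {Y B : Fin n → Type*}
    [∀ i, MeasurableSpace (Y i)] [∀ i, MeasurableSpace (B i)]
    (κ : ∀ i, Kernel (Y i) (B i)) (hκ : ∀ i, IsMarkovKernel (κ i)) :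
    Measurable fun y : ∀ i, Y i => Measure.pi (fun i => κ i (y i)) := by
  haveI := hκ
  refine Measure.measurable_of_measurable_coe _ fun s hs => ?_
  refine MeasurableSpace.induction_on_inter
    (C := fun s _ => Measurable fun y : ∀ i, Y i => Measure.pi (fun i => κ i (y i)) s)
    generateFrom_pi.symm isPiSystem_pi (by simp) ?_ ?_ ?_ s hs
  · rintro t ⟨t', ht', rfl⟩
    simp_rw [Measure.pi_pi]
    exact Finset.measurable_prod _ fun i _ =>
      (Kernel.measurable_coe (κ i) (ht' i (mem_univ i))).comp (measurable_pi_apply i)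
  · intro t htm iht
    simp_rw [prob_compl_eq_one_sub htm]
    exact Measurable.const_sub iht _
  · intro f hd hfm ihf
    simp_rw [measure_iUnion hd hfm]
    exact Measurable.ennreal_tsum ihf

lemma measurable_integral_pi_kernel {n : ℕ} {Y B : Fin n → Type*}
    [∀ i, MeasurableSpace (Y i)] [∀ i, MeasurableSpace (B i)]
    (κ : ∀ i, Kernel (Y i) (B i)) (hκ : ∀ i, IsMarkovKernel (κ i))
    (G : (∀ i, B i) → ℝ) (hGm : Measurable G) (M : ℝ) (hGb : ∀ b, |G b| ≤ M) :
    Measurable fun y : ∀ i, Y i => ∫ b, G b ∂Measure.pi (fun i => κ i (y i)) := by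
  haveI := hκ
  have hm := measurable_pi_kernel κ hκ
  have hint : ∀ y : ∀ i, Y i, Integrable G (Measure.pi fun i => κ i (y i)) := fun y =>
    ⟨hGm.aestronglyMeasurable,
      HasFiniteIntegral.of_bounded (C := M) (Filter.Eventually.of_forall fun b => by
        simpa using hGb b)⟩
  simp_rw [integral_eq_lintegral_pos_part_sub_lintegral_neg_part (hint _)]
  refine Measurable.sub ?_ ?_
  · exact ((Measure.measurable_lintegral
      (ENNReal.measurable_ofReal.comp hGm)).comp hm).ennreal_toReal
  · exact ((Measure.measurable_lintegral
      (ENNReal.measurable_ofReal.comp hGm.neg)).comp hm).ennreal_toReal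

lemma abs_prod_sub_prod_le {ι : Type*} [DecidableEq ι] (s : Finset ι) (u v : ι → ℝ)
    (hu : ∀ i, 0 ≤ u i) (hv : ∀ i, 0 ≤ v i) :
    |∏ i ∈ s, u i - ∏ i ∈ s, v i| ≤
      ∑ i ∈ s, |u i - v i| * ∏ j ∈ s.erase i, max (u j) (v j) := by
  induction s using Finset.induction_on with
  | empty => simp
  | @insert a s ha ih =>
    rw [Finset.prod_insert ha, Finset.prod_insert ha]
    have key : u a * ∏ i ∈ s, u i - v a * ∏ i ∈ s, v i =
        (u a - v a) * ∏ i ∈ s, u i + v a * (∏ i ∈ s, u i - ∏ i ∈ s, v i) := by ring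
    rw [key]
    refine le_trans (abs_add_le _ _) ?_
    rw [Finset.sum_insert ha, Finset.erase_insert ha]
    have h1 : |(u a - v a) * ∏ i ∈ s, u i| ≤ |u a - v a| * ∏ j ∈ s, max (u j) (v j) := by
      rw [abs_mul]
      refine mul_le_mul_of_nonneg_left ?_ (abs_nonneg _)
      rw [abs_of_nonneg (Finset.prod_nonneg fun i _ => hu i)]
      exact Finset.prod_le_prod (fun i _ => hu i) fun i _ => le_max_left _ _
    have h2 : |v a * (∏ i ∈ s, u i - ∏ i ∈ s, v i)| ≤
        ∑ i ∈ s, |u i - v i| * ∏ j ∈ (insert a s).erase i, max (u j) (v j) := by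
      rw [abs_mul, abs_of_nonneg (hv a)]
      calc v a * |∏ i ∈ s, u i - ∏ i ∈ s, v i|
          ≤ max (u a) (v a) * ∑ i ∈ s, |u i - v i| * ∏ j ∈ s.erase i, max (u j) (v j) := by
            refine mul_le_mul (le_max_right _ _) ih (abs_nonneg _) ?_
            exact le_trans (hv a) (le_max_right _ _)
        _ = ∑ i ∈ s, |u i - v i| *
              (max (u a) (v a) * ∏ j ∈ s.erase i, max (u j) (v j)) := by
            rw [Finset.mul_sum]; exact Finset.sum_congr rfl fun i _ => by ring
        _ = ∑ i ∈ s, |u i - v i| * ∏ j ∈ (insert a s).erase i, max (u j) (v j) := by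
            refine Finset.sum_congr rfl fun i hi => ?_
            have hia : i ≠ a := by rintro rfl; exact ha hi
            have hanotin : a ∉ s.erase i := fun h => ha (Finset.mem_of_mem_erase h)
            rw [Finset.erase_insert_of_ne hia.symm, Finset.prod_insert hanotin]
    exact add_le_add h1 h2

end AuxLemmas

/-- Condition **C1** of the paper: the pair `(η, ν)` consists of a jointly continuous
function `η` together with a "variation control" function `h` which is bounded, has
uniformly bounded `ν`-integrals, and controls the variation of `η` in its first
argument uniformly. -/
def CondC1 {A Y : Type*} [PseudoMetricSpace A] [MeasurableSpace A]
    [TopologicalSpace Y] [MeasurableSpace Y]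
    (η : A → Y → ℝ) (ν : Measure Y) : Prop :=
  Continuous (fun p : A × Y => η p.1 p.2) ∧
  ∃ h : A → Y → ℝ,
    (∀ a y, 0 ≤ h a y) ∧
    Measurable (fun p : A × Y => h p.1 p.2) ∧
    (∃ Cb : ℝ, ∀ a y, h a y ≤ Cb) ∧
    (∃ M : ℝ≥0∞, M ≠ ⊤ ∧ ∀ a, (∫⁻ y, ENNReal.ofReal (h a y) ∂ν) ≤ M) ∧
    (∀ ε : ℝ, 0 < ε → ∃ δ : ℝ, 0 < δ ∧
      ∀ a₀ a : A, dist a a₀ < δ → ∀ y, |η a y - η a₀ y| < ε * h a₀ y)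

/-- The family `{f_{κ¹,…,κᴺ}}` over all N-tuples of Markov kernels is uniformly bounded
by `sup |g|` and uniformly equicontinuous on `A × C`. -/
theorem stmt_2 {N : ℕ}
    {A C : Type*} {B Y : Fin N → Type*}
    [MetricSpace A] [CompleteSpace A] [SeparableSpace A] [MeasurableSpace A] [BorelSpace A]
    [MetricSpace C] [CompleteSpace C] [SeparableSpace C] [MeasurableSpace C] [BorelSpace C]
    [∀ i, MetricSpace (B i)] [∀ i, CompleteSpace (B i)] [∀ i, SeparableSpace (B i)]
    [∀ i, MeasurableSpace (B i)] [∀ i, BorelSpace (B i)]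
    [∀ i, MetricSpace (Y i)] [∀ i, CompleteSpace (Y i)] [∀ i, SeparableSpace (Y i)]
    [∀ i, MeasurableSpace (Y i)] [∀ i, BorelSpace (Y i)]
    (ν : ∀ i, Measure (Y i))
    (η : ∀ i, A → Y i → ℝ) (hηnn : ∀ i a y, 0 ≤ η i a y)
    (hC1 : ∀ i, CondC1 (η i) (ν i))
    (hnorm : ∀ i a, (∫⁻ y, ENNReal.ofReal (η i a y) ∂(ν i)) = 1)
    (g : A → (∀ i, B i) → C → ℝ)
    (hgbdd : ∃ M : ℝ, ∀ a b c, |g a b c| ≤ M)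
    (hguc : UniformContinuous (fun p : A × (∀ i, B i) × C => g p.1 p.2.1 p.2.2))
    (f : (∀ i, Kernel (Y i) (B i)) → A × C → ℝ)
    (hf : ∀ (κ : ∀ i, Kernel (Y i) (B i)), (∀ i, IsMarkovKernel (κ i)) → ∀ a c,
      f κ (a, c) =
        ∫ y : ∀ i, Y i,
          (∫ b : ∀ i, B i, g a b c ∂(Measure.pi fun i => κ i (y i))) *
            (∏ i, η i a (y i)) ∂(Measure.pi ν)) :
    (∀ M : ℝ, (∀ a b c, |g a b c| ≤ M) →
      ∀ (κ : ∀ i, Kernel (Y i) (B i)), (∀ i, IsMarkovKernel (κ i)) →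
        ∀ z : A × C, |f κ z| ≤ M) ∧
    (∀ ε : ℝ, 0 < ε → ∃ δ : ℝ, 0 < δ ∧
      ∀ (κ : ∀ i, Kernel (Y i) (B i)), (∀ i, IsMarkovKernel (κ i)) →
        ∀ z z' : A × C, dist z z' < δ → |f κ z - f κ z'| < ε) := by
  classical
  -- measurability of the η's in the second variable
  have hηmeas : ∀ (i : Fin N) (a : A), Measurable fun x : Y i => ENNReal.ofReal (η i a x) :=
    fun i a => ENNReal.measurable_ofReal.comp
      (((hC1 i).1.comp (Continuous.prodMk_right a)).measurable)
  -- the product weight has lintegral at most 1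
  have hWle : ∀ a : A,
      ∫⁻ y : ∀ i, Y i, ∏ i, ENNReal.ofReal (η i a (y i)) ∂Measure.pi ν ≤ 1 := by
    intro a
    refine le_trans (lintegral_pi_prod_le ν (fun i x => ENNReal.ofReal (η i a x))
      (fun i => hηmeas i a) (fun i => by rw [hnorm i a]; exact ENNReal.one_ne_top)) ?_
    refine le_of_eq ?_
    rw [Finset.prod_congr rfl fun i _ => hnorm i a, Finset.prod_const_one]
  constructor
  · -- uniform boundedness
    intro M hM κ hκ z
    obtain ⟨a, c⟩ := z
    haveI := hκ
    rw [hf κ hκ a c]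
    -- the spaces are nonempty, so M is nonnegative
    haveI hYne : ∀ i, Nonempty (Y i) := by
      intro i
      by_contra hne
      rw [not_nonempty_iff] at hne
      have h0 : ν i = 0 := Subsingleton.elim _ _
      have h1 := hnorm i a
      rw [h0] at h1
      simp at h1
    haveI hBne : ∀ i, Nonempty (B i) := by
      intro i
      obtain ⟨y⟩ := hYne i
      by_contra hne
      rw [not_nonempty_iff] at hne
      have h1 : (κ i) y Set.univ = 1 := measure_univ
      rw [Set.univ_eq_empty_iff.2 hne] at h1
      simp at h1
    have hM0 : 0 ≤ M :=
      le_trans (abs_nonneg _) (hM a (fun i => Classical.arbitrary _) c)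
    -- pointwise bound on the inner integral
    have hφle : ∀ y : ∀ i, Y i,
        |∫ b, g a b c ∂Measure.pi (fun i => κ i (y i))| ≤ M := by
      intro y
      have := norm_integral_le_of_norm_le_const
        (μ := Measure.pi fun i => κ i (y i)) (f := fun b => g a b c) (C := M)
        (Filter.Eventually.of_forall fun b => by simpa using hM a b c)
      simpa using this
    have hbound : ∫⁻ y : ∀ i, Y i,
        ENNReal.ofReal ‖(∫ b, g a b c ∂Measure.pi (fun i => κ i (y i))) *
          ∏ i, η i a (y i)‖ ∂Measure.pi ν ≤ ENNReal.ofReal M := by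
      calc ∫⁻ y : ∀ i, Y i, ENNReal.ofReal
            ‖(∫ b, g a b c ∂Measure.pi (fun i => κ i (y i))) * ∏ i, η i a (y i)‖ ∂Measure.pi ν
          ≤ ∫⁻ y : ∀ i, Y i,
              ENNReal.ofReal M * ∏ i, ENNReal.ofReal (η i a (y i)) ∂Measure.pi ν := by
            refine lintegral_mono fun y => ?_
            rw [← ENNReal.ofReal_prod_of_nonneg (fun i _ => hηnn i a (y i)),
              ← ENNReal.ofReal_mul hM0]
            refine ENNReal.ofReal_le_ofReal ?_
            rw [Real.norm_eq_abs, abs_mul,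
              abs_of_nonneg (Finset.prod_nonneg fun i _ => hηnn i a (y i))]
            exact mul_le_mul_of_nonneg_right (hφle y)
              (Finset.prod_nonneg fun i _ => hηnn i a (y i))
        _ = ENNReal.ofReal M *
              ∫⁻ y : ∀ i, Y i, ∏ i, ENNReal.ofReal (η i a (y i)) ∂Measure.pi ν :=
            lintegral_const_mul _ (Finset.measurable_prod _ fun i _ =>
              (hηmeas i a).comp (measurable_pi_apply i))
        _ ≤ ENNReal.ofReal M * 1 := mul_le_mul' le_rfl (hWle a)
        _ = ENNReal.ofReal M := mul_one _
    calc |∫ y : ∀ i, Y i, (∫ b, g a b c ∂Measure.pi fun i => κ i (y i)) *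
            ∏ i, η i a (y i) ∂Measure.pi ν|
        ≤ (∫⁻ y : ∀ i, Y i, ENNReal.ofReal
            ‖(∫ b, g a b c ∂Measure.pi fun i => κ i (y i)) *
              ∏ i, η i a (y i)‖ ∂Measure.pi ν).toReal := by
          rw [← Real.norm_eq_abs]
          exact norm_integral_le_lintegral_norm _
      _ ≤ M := ENNReal.toReal_le_of_le_ofReal hM0 hbound
  · -- uniform equicontinuity
    intro ε hε
    obtain ⟨Mg₀, hMg₀⟩ := hgbdd
    set Mg : ℝ := max Mg₀ 0 with hMgdef
    have hMg0 : 0 ≤ Mg := le_max_right _ _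
    have hMg : ∀ a b c, |g a b c| ≤ Mg := fun a b c => le_trans (hMg₀ a b c) (le_max_left _ _)
    choose h hspec using fun i => (hC1 i).2
    have hh0 : ∀ i a y, 0 ≤ h i a y := fun i => (hspec i).1
    have hhm : ∀ i, Measurable fun p : A × Y i => h i p.1 p.2 := fun i => (hspec i).2.1
    choose Mh hMhne hMhle using fun i => (hspec i).2.2.2.1
    have hδη := fun i => (hspec i).2.2.2.2
    set K : ℝ≥0∞ := (∑ i, Mh i) * 2 ^ N with hKdef
    have hKne : K ≠ ⊤ := by
      refine ENNReal.mul_ne_top ?_ (ENNReal.pow_ne_top (by simp))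
      exact (ENNReal.sum_lt_top.2 fun i _ => (hMhne i).lt_top).ne
    set KR : ℝ := K.toReal with hKRdef
    have hKR0 : 0 ≤ KR := ENNReal.toReal_nonneg
    set ε2 : ℝ := ε / 4 / ((Mg + 1) * (KR + 1)) with hε2def
    have hε2 : 0 < ε2 := by positivity
    obtain ⟨δ₁, hδ₁pos, hδ₁⟩ := Metric.uniformContinuous_iff.1 hguc (ε / 2) (by positivity)
    choose δ₂ hδ₂pos hδ₂ using fun i => hδη i ε2 hε2
    have hexδ : ∃ δ₀ : ℝ, 0 < δ₀ ∧ ∀ i, δ₀ ≤ δ₂ i := by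
      rcases isEmpty_or_nonempty (Fin N) with hN | hN
      · exact ⟨1, one_pos, fun i => (hN.false i).elim⟩
      · obtain ⟨i₀, -, hi₀⟩ := Finset.exists_min_image Finset.univ δ₂
          ⟨Classical.arbitrary _, Finset.mem_univ _⟩
        exact ⟨δ₂ i₀, hδ₂pos i₀, fun i => hi₀ i (Finset.mem_univ i)⟩
    obtain ⟨δ₀, hδ₀pos, hδ₀le⟩ := hexδ
    refine ⟨min δ₁ δ₀, lt_min hδ₁pos hδ₀pos, ?_⟩
    intro κ hκ z z' hzz'
    obtain ⟨a, c⟩ := z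
    obtain ⟨a', c'⟩ := z'
    haveI := hκ
    rw [hf κ hκ a c, hf κ hκ a' c']
    -- distance facts
    have hdA : dist a a' < min δ₁ δ₀ :=
      lt_of_le_of_lt (by rw [Prod.dist_eq]; exact le_max_left _ _) hzz'
    have hdC : dist c c' < min δ₁ δ₀ :=
      lt_of_le_of_lt (by rw [Prod.dist_eq]; exact le_max_right _ _) hzz'
    have hdA1 : dist a a' < δ₁ := lt_of_lt_of_le hdA (min_le_left _ _)
    have hdA0 : dist a a' < δ₀ := lt_of_lt_of_le hdA (min_le_right _ _)
    have hdC1 : dist c c' < δ₁ := lt_of_lt_of_le hdC (min_le_left _ _)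
    -- measurability of g slices
    have hgm : ∀ (aa : A) (cc : C), Measurable fun b : ∀ i, B i => g aa b cc := by
      intro aa cc
      exact (hguc.continuous.comp
        (continuous_const.prodMk (continuous_id.prodMk continuous_const))).measurable
    -- integrability of g slices w.r.t. the product kernel measures
    have hGint : ∀ (aa : A) (cc : C) (y : ∀ i, Y i),
        Integrable (fun b => g aa b cc) (Measure.pi fun i => κ i (y i)) := fun aa cc y =>
      ⟨(hgm aa cc).aestronglyMeasurable,
        HasFiniteIntegral.of_bounded (C := Mg)
          (Filter.Eventually.of_forall fun b => by simpa using hMg aa b cc)⟩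
    have hφle : ∀ (aa : A) (cc : C) (y : ∀ i, Y i),
        |∫ b, g aa b cc ∂Measure.pi fun i => κ i (y i)| ≤ Mg := by
      intro aa cc y
      have := norm_integral_le_of_norm_le_const
        (μ := Measure.pi fun i => κ i (y i)) (f := fun b => g aa b cc) (C := Mg)
        (Filter.Eventually.of_forall fun b => by simpa using hMg aa b cc)
      simpa using this
    have hφm : ∀ (aa : A) (cc : C),
        Measurable fun y : ∀ i, Y i => ∫ b, g aa b cc ∂Measure.pi fun i => κ i (y i) :=
      fun aa cc => measurable_integral_pi_kernel κ hκ _ (hgm aa cc) Mg (fun b => hMg aa b cc)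
    have hwm : ∀ aa : A, Measurable fun y : ∀ i, Y i => ∏ i, η i aa (y i) := fun aa =>
      Finset.measurable_prod _ fun i _ =>
        (((hC1 i).1.comp (Continuous.prodMk_right aa)).measurable).comp (measurable_pi_apply i)
    have hWm : ∀ aa : A, Measurable fun y : ∀ i, Y i => ∏ i, ENNReal.ofReal (η i aa (y i)) :=
      fun aa => Finset.measurable_prod _ fun i _ =>
        (hηmeas i aa).comp (measurable_pi_apply i)
    -- integrability of the main integrands
    have hXint : ∀ (aa : A) (cc : C),
        Integrable (fun y : ∀ i, Y i =>
          (∫ b, g aa b cc ∂Measure.pi fun i => κ i (y i)) * ∏ i, η i aa (y i))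
          (Measure.pi ν) := by
      intro aa cc
      refine ⟨((hφm aa cc).mul (hwm aa)).aestronglyMeasurable, ?_⟩
      rw [hasFiniteIntegral_iff_norm]
      calc ∫⁻ y : ∀ i, Y i, ENNReal.ofReal
            ‖(∫ b, g aa b cc ∂Measure.pi fun i => κ i (y i)) * ∏ i, η i aa (y i)‖ ∂Measure.pi ν
          ≤ ∫⁻ y : ∀ i, Y i,
              ENNReal.ofReal Mg * ∏ i, ENNReal.ofReal (η i aa (y i)) ∂Measure.pi ν := by
            refine lintegral_mono fun y => ?_
            rw [← ENNReal.ofReal_prod_of_nonneg (fun i _ => hηnn i aa (y i)),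
              ← ENNReal.ofReal_mul hMg0]
            refine ENNReal.ofReal_le_ofReal ?_
            rw [Real.norm_eq_abs, abs_mul,
              abs_of_nonneg (Finset.prod_nonneg fun i _ => hηnn i aa (y i))]
            exact mul_le_mul_of_nonneg_right (hφle aa cc y)
              (Finset.prod_nonneg fun i _ => hηnn i aa (y i))
        _ = ENNReal.ofReal Mg *
              ∫⁻ y : ∀ i, Y i, ∏ i, ENNReal.ofReal (η i aa (y i)) ∂Measure.pi ν :=
            lintegral_const_mul _ (hWm aa)
        _ ≤ ENNReal.ofReal Mg * 1 := mul_le_mul' le_rfl (hWle aa)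
        _ < ⊤ := by simp [ENNReal.ofReal_lt_top]
    rw [← integral_sub (hXint a c) (hXint a' c')]
    -- pointwise bound on the difference of the inner integrals
    have hφdiff : ∀ y : ∀ i, Y i,
        |(∫ b, g a b c ∂Measure.pi fun i => κ i (y i)) -
          ∫ b, g a' b c' ∂Measure.pi fun i => κ i (y i)| ≤ ε / 2 := by
      intro y
      rw [← integral_sub (hGint a c y) (hGint a' c' y)]
      have hb : ∀ b : ∀ i, B i, ‖g a b c - g a' b c'‖ ≤ ε / 2 := by
        intro b
        have hd : dist (⟨a, b, c⟩ : A × (∀ i, B i) × C) ⟨a', b, c'⟩ < δ₁ := by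
          rw [Prod.dist_eq]
          refine max_lt hdA1 ?_
          rw [Prod.dist_eq]
          exact max_lt (by simpa [dist_self] using hδ₁pos) hdC1
        have := hδ₁ hd
        rw [Real.dist_eq] at this
        rw [Real.norm_eq_abs]
        exact this.le
      have := norm_integral_le_of_norm_le_const
        (μ := Measure.pi fun i => κ i (y i)) (C := ε / 2)
        (Filter.Eventually.of_forall hb)
      simpa using this
    -- the ENNReal correction terms
    set T : Fin N → (∀ i, Y i) → ℝ≥0∞ := fun i y =>
      ENNReal.ofReal |η i a (y i) - η i a' (y i)| *
        ∏ j ∈ Finset.univ.erase i,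
          (ENNReal.ofReal (η j a (y j)) + ENNReal.ofReal (η j a' (y j))) with hTdef
    have hηam : ∀ (i : Fin N) (aa : A), Measurable fun y : ∀ i, Y i => η i aa (y i) :=
      fun i aa =>
        (((hC1 i).1.comp (Continuous.prodMk_right aa)).measurable).comp (measurable_pi_apply i)
    have hTm : ∀ i, Measurable (T i) := by
      intro i
      refine Measurable.mul ?_ (Finset.measurable_prod _ fun j _ => ?_)
      · exact ENNReal.measurable_ofReal.comp ((hηam i a).sub (hηam i a')).abs
      · exact (ENNReal.measurable_ofReal.comp (hηam j a)).add
          (ENNReal.measurable_ofReal.comp (hηam j a'))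
    -- pointwise bound
    have hpoint : ∀ y : ∀ i, Y i,
        ENNReal.ofReal ‖(∫ b, g a b c ∂Measure.pi fun i => κ i (y i)) * ∏ i, η i a (y i) -
            (∫ b, g a' b c' ∂Measure.pi fun i => κ i (y i)) * ∏ i, η i a' (y i)‖ ≤
          ENNReal.ofReal (ε / 2) * ∏ i, ENNReal.ofReal (η i a (y i)) +
            ENNReal.ofReal Mg * ∑ i, T i y := by
      intro y
      have hw0 : (0:ℝ) ≤ ∏ i, η i a (y i) := Finset.prod_nonneg fun i _ => hηnn i a (y i)
      have htele := abs_prod_sub_prod_le Finset.univ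
        (fun i => η i a (y i)) (fun i => η i a' (y i))
        (fun i => hηnn i a (y i)) (fun i => hηnn i a' (y i))
      have hreal : ‖(∫ b, g a b c ∂Measure.pi fun i => κ i (y i)) * ∏ i, η i a (y i) -
            (∫ b, g a' b c' ∂Measure.pi fun i => κ i (y i)) * ∏ i, η i a' (y i)‖ ≤
          ε / 2 * ∏ i, η i a (y i) +
            Mg * ∑ i, |η i a (y i) - η i a' (y i)| *
              ∏ j ∈ Finset.univ.erase i, max (η j a (y j)) (η j a' (y j)) := by
        rw [Real.norm_eq_abs]
        have heq : (∫ b, g a b c ∂Measure.pi fun i => κ i (y i)) * ∏ i, η i a (y i) -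
            (∫ b, g a' b c' ∂Measure.pi fun i => κ i (y i)) * ∏ i, η i a' (y i) =
            ((∫ b, g a b c ∂Measure.pi fun i => κ i (y i)) -
              (∫ b, g a' b c' ∂Measure.pi fun i => κ i (y i))) * (∏ i, η i a (y i)) +
            (∫ b, g a' b c' ∂Measure.pi fun i => κ i (y i)) *
              ((∏ i, η i a (y i)) - ∏ i, η i a' (y i)) := by ring
        rw [heq]
        refine le_trans (abs_add_le _ _) (add_le_add ?_ ?_)
        · rw [abs_mul, abs_of_nonneg hw0]
          exact mul_le_mul_of_nonneg_right (hφdiff y) hw0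
        · rw [abs_mul]
          exact mul_le_mul (hφle a' c' y) htele (abs_nonneg _) hMg0
      calc ENNReal.ofReal ‖(∫ b, g a b c ∂Measure.pi fun i => κ i (y i)) * ∏ i, η i a (y i) -
              (∫ b, g a' b c' ∂Measure.pi fun i => κ i (y i)) * ∏ i, η i a' (y i)‖
          ≤ ENNReal.ofReal (ε / 2 * ∏ i, η i a (y i) +
              Mg * ∑ i, |η i a (y i) - η i a' (y i)| *
                ∏ j ∈ Finset.univ.erase i, max (η j a (y j)) (η j a' (y j))) :=
            ENNReal.ofReal_le_ofReal hreal
        _ ≤ ENNReal.ofReal (ε / 2 * ∏ i, η i a (y i)) +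
              ENNReal.ofReal (Mg * ∑ i, |η i a (y i) - η i a' (y i)| *
                ∏ j ∈ Finset.univ.erase i, max (η j a (y j)) (η j a' (y j))) :=
            ENNReal.ofReal_add_le
        _ ≤ ENNReal.ofReal (ε / 2) * ∏ i, ENNReal.ofReal (η i a (y i)) +
              ENNReal.ofReal Mg * ∑ i, T i y := by
            refine add_le_add (le_of_eq ?_) ?_
            · rw [ENNReal.ofReal_mul (by positivity),
                ENNReal.ofReal_prod_of_nonneg (fun i _ => hηnn i a (y i))]
            · rw [ENNReal.ofReal_mul hMg0]
              refine mul_le_mul' le_rfl ?_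
              rw [ENNReal.ofReal_sum_of_nonneg (fun i _ => mul_nonneg (abs_nonneg _)
                (Finset.prod_nonneg fun j _ => le_trans (hηnn j a (y j)) (le_max_left _ _)))]
              refine Finset.sum_le_sum fun i _ => ?_
              rw [ENNReal.ofReal_mul (abs_nonneg _),
                ENNReal.ofReal_prod_of_nonneg (fun j _ =>
                  le_trans (hηnn j a (y j)) (le_max_left _ _))]
              refine mul_le_mul' le_rfl (Finset.prod_le_prod' fun j _ => ?_)
              refine le_trans (ENNReal.ofReal_le_ofReal
                (max_le_add_of_nonneg (hηnn j a (y j)) (hηnn j a' (y j)))) ?_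
              exact le_of_eq (ENNReal.ofReal_add (hηnn j a (y j)) (hηnn j a' (y j)))
    -- bound on the lintegral of each T i
    have hTle : ∀ i, ∫⁻ y, T i y ∂Measure.pi ν ≤ ENNReal.ofReal ε2 * Mh i * 2 ^ N := by
      intro i
      set F : ∀ k, Y k → ℝ≥0∞ := fun k x =>
        if k = i then ENNReal.ofReal |η k a x - η k a' x|
        else ENNReal.ofReal (η k a x) + ENNReal.ofReal (η k a' x) with hFdef
      have hFm : ∀ k, Measurable (F k) := by
        intro k
        by_cases hk : k = i
        · subst hk
          simp only [hFdef, if_pos rfl]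
          exact ENNReal.measurable_ofReal.comp
            ((((hC1 k).1.comp (Continuous.prodMk_right a)).measurable).sub
              (((hC1 k).1.comp (Continuous.prodMk_right a')).measurable)).abs
        · simp only [hFdef, if_neg hk]
          exact (hηmeas k a).add (hηmeas k a')
      have hFi : ∫⁻ x, F i x ∂ν i ≤ ENNReal.ofReal ε2 * Mh i := by
        have hdA2 : dist a a' < δ₂ i := lt_of_lt_of_le hdA0 (hδ₀le i)
        calc ∫⁻ x, F i x ∂ν i
            = ∫⁻ x, ENNReal.ofReal |η i a x - η i a' x| ∂ν i := by simp [hFdef]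
          _ ≤ ∫⁻ x, ENNReal.ofReal (ε2 * h i a' x) ∂ν i := by
              refine lintegral_mono fun x => ENNReal.ofReal_le_ofReal ?_
              exact (hδ₂ i a' a hdA2 x).le
          _ = ENNReal.ofReal ε2 * ∫⁻ x, ENNReal.ofReal (h i a' x) ∂ν i := by
              simp_rw [ENNReal.ofReal_mul hε2.le]
              exact lintegral_const_mul _ (ENNReal.measurable_ofReal.comp
                ((hhm i).comp measurable_prodMk_left))
          _ ≤ ENNReal.ofReal ε2 * Mh i := mul_le_mul' le_rfl (hMhle i a')
      have hFj : ∀ k, k ≠ i → ∫⁻ x, F k x ∂ν k = 2 := by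
        intro k hk
        have hFk : ∀ x, F k x = ENNReal.ofReal (η k a x) + ENNReal.ofReal (η k a' x) := by
          intro x; simp [hFdef, hk]
        simp_rw [hFk]
        rw [lintegral_add_left (hηmeas k a), hnorm k a, hnorm k a']
        norm_num
      have hFfin : ∀ k, ∫⁻ x, F k x ∂ν k ≠ ⊤ := by
        intro k
        by_cases hk : k = i
        · subst hk
          exact (lt_of_le_of_lt hFi (ENNReal.mul_lt_top ENNReal.ofReal_lt_top
            (hMhne k).lt_top)).ne
        · rw [hFj k hk]; simp
      have hTeq : ∀ y : ∀ i, Y i, T i y = ∏ k, F k (y k) := by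
        intro y
        rw [← Finset.mul_prod_erase Finset.univ (fun k => F k (y k)) (Finset.mem_univ i)]
        simp only [hTdef, hFdef]
        rw [if_pos trivial]
        refine congrArg _ (Finset.prod_congr rfl fun j hj => ?_)
        rw [if_neg (Finset.ne_of_mem_erase hj)]
      calc ∫⁻ y, T i y ∂Measure.pi ν = ∫⁻ y, ∏ k, F k (y k) ∂Measure.pi ν :=
            lintegral_congr hTeq
        _ ≤ ∏ k, ∫⁻ x, F k x ∂ν k := lintegral_pi_prod_le ν F hFm hFfin
        _ = (∫⁻ x, F i x ∂ν i) * ∏ k ∈ Finset.univ.erase i, ∫⁻ x, F k x ∂ν k :=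
            (Finset.mul_prod_erase Finset.univ _ (Finset.mem_univ i)).symm
        _ ≤ (ENNReal.ofReal ε2 * Mh i) * 2 ^ N := by
            refine mul_le_mul' hFi ?_
            calc ∏ k ∈ Finset.univ.erase i, ∫⁻ x, F k x ∂ν k
                = ∏ _k ∈ Finset.univ.erase i, (2:ℝ≥0∞) :=
                  Finset.prod_congr rfl fun k hk => hFj k (Finset.ne_of_mem_erase hk)
              _ = (2:ℝ≥0∞) ^ (Finset.univ.erase i).card := Finset.prod_const _
              _ ≤ (2:ℝ≥0∞) ^ N := by
                  refine pow_le_pow_right₀ one_le_two ?_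
                  refine le_trans Finset.card_erase_le ?_
                  simp
        _ = ENNReal.ofReal ε2 * Mh i * 2 ^ N := by ring
    -- sum of the T bounds
    have hsumT : ∑ i, ∫⁻ y, T i y ∂Measure.pi ν ≤ ENNReal.ofReal ε2 * K := by
      calc ∑ i, ∫⁻ y, T i y ∂Measure.pi ν ≤ ∑ i, ENNReal.ofReal ε2 * Mh i * 2 ^ N :=
            Finset.sum_le_sum fun i _ => hTle i
        _ = ENNReal.ofReal ε2 * ((∑ i, Mh i) * 2 ^ N) := by
            rw [Finset.sum_congr rfl fun i (_ : i ∈ Finset.univ) =>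
              (by ring : ENNReal.ofReal ε2 * Mh i * 2 ^ N =
                ENNReal.ofReal ε2 * (Mh i * 2 ^ N)),
              ← Finset.mul_sum, ← Finset.sum_mul]
        _ = ENNReal.ofReal ε2 * K := by rw [hKdef]
    -- the key real inequality
    have hrealineq : Mg * ε2 * KR ≤ ε / 4 := by
      have hden : (0:ℝ) < (Mg + 1) * (KR + 1) := by positivity
      have h1 : Mg * KR ≤ (Mg + 1) * (KR + 1) := by nlinarith
      calc Mg * ε2 * KR = ε / 4 * ((Mg * KR) / ((Mg + 1) * (KR + 1))) := by
            rw [hε2def]; ring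
        _ ≤ ε / 4 * 1 := by
            refine mul_le_mul_of_nonneg_left ?_ (by positivity)
            rw [div_le_one hden]; exact h1
        _ = ε / 4 := mul_one _
    have hMgK : ENNReal.ofReal Mg * (ENNReal.ofReal ε2 * K) ≤ ENNReal.ofReal (ε / 4) := by
      have hKR : K = ENNReal.ofReal KR := (ENNReal.ofReal_toReal hKne).symm
      calc ENNReal.ofReal Mg * (ENNReal.ofReal ε2 * K)
          = ENNReal.ofReal Mg * ENNReal.ofReal ε2 * ENNReal.ofReal KR := by
            rw [hKR]; ring
        _ = ENNReal.ofReal (Mg * ε2 * KR) := by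
            rw [← ENNReal.ofReal_mul hMg0, ← ENNReal.ofReal_mul (mul_nonneg hMg0 hε2.le)]
        _ ≤ ENNReal.ofReal (ε / 4) := ENNReal.ofReal_le_ofReal hrealineq
    -- main lintegral bound
    have hlint : ∫⁻ y : ∀ i, Y i, ENNReal.ofReal
        ‖(∫ b, g a b c ∂Measure.pi fun i => κ i (y i)) * ∏ i, η i a (y i) -
          (∫ b, g a' b c' ∂Measure.pi fun i => κ i (y i)) * ∏ i, η i a' (y i)‖ ∂Measure.pi ν ≤
        ENNReal.ofReal (ε / 2 + ε / 4) := by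
      calc ∫⁻ y : ∀ i, Y i, ENNReal.ofReal
            ‖(∫ b, g a b c ∂Measure.pi fun i => κ i (y i)) * ∏ i, η i a (y i) -
              (∫ b, g a' b c' ∂Measure.pi fun i => κ i (y i)) * ∏ i, η i a' (y i)‖ ∂Measure.pi ν
          ≤ ∫⁻ y : ∀ i, Y i, (ENNReal.ofReal (ε / 2) * ∏ i, ENNReal.ofReal (η i a (y i)) +
              ENNReal.ofReal Mg * ∑ i, T i y) ∂Measure.pi ν := lintegral_mono hpoint
        _ = ENNReal.ofReal (ε / 2) *
              (∫⁻ y : ∀ i, Y i, ∏ i, ENNReal.ofReal (η i a (y i)) ∂Measure.pi ν) +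
            ENNReal.ofReal Mg * ∑ i, ∫⁻ y, T i y ∂Measure.pi ν := by
            rw [lintegral_add_left (Measurable.const_mul (hWm a) _),
              lintegral_const_mul _ (hWm a),
              lintegral_const_mul _ (Finset.measurable_sum _ fun i _ => hTm i),
              lintegral_finset_sum _ fun i _ => hTm i]
        _ ≤ ENNReal.ofReal (ε / 2) * 1 + ENNReal.ofReal Mg * (ENNReal.ofReal ε2 * K) :=
            add_le_add (mul_le_mul' le_rfl (hWle a)) (mul_le_mul' le_rfl hsumT)
        _ ≤ ENNReal.ofReal (ε / 2) + ENNReal.ofReal (ε / 4) := by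
            rw [mul_one]
            exact add_le_add le_rfl hMgK
        _ = ENNReal.ofReal (ε / 2 + ε / 4) :=
            (ENNReal.ofReal_add (by positivity) (by positivity)).symm
    have hfinal : |∫ y : ∀ i, Y i,
        ((∫ b, g a b c ∂Measure.pi fun i => κ i (y i)) * ∏ i, η i a (y i) -
          (∫ b, g a' b c' ∂Measure.pi fun i => κ i (y i)) * ∏ i, η i a' (y i)) ∂Measure.pi ν| ≤
        ε / 2 + ε / 4 := by
      rw [← Real.norm_eq_abs]
      refine le_trans (norm_integral_le_lintegral_norm _) ?_
      exact ENNReal.toReal_le_of_le_ofReal (by positivity) hlint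
    exact lt_of_le_of_lt hfinal (by linarith)
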